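/- arXiv:2502.02604 — 3 statements merged into one kernel-verified Lean document; each statement's English description precedes it below -/
import Mathlib

section
/- For every κ with 0 ≤ κ < 1, there exist differentiable functions f₁, f₂, f₃ : ℝ → ℝ, defined on all of ℝ, satisfying f₁' = −κ² f₂ f₃, f₂' = f₁ f₃, f₃' = −f₁ f₂ together with the initial conditions f₁(0) = −1, f₂(0) = 0, f₃(0) = −1 (global existence of the Jacobi elliptic functions −dn, sn, −cn of modulus κ). -/
open Real


/-- Global existence of the Jacobi elliptic functions −dn, sn, −cn of modulus
κ, 0 ≤ κ < 1: there exist functions f₁, f₂, f₃ : ℝ → ℝ defined on all of ℝ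
satisfying f₁' = −κ²f₂f₃, f₂' = f₁f₃, f₃' = −f₁f₂ with f₁(0) = −1, f₂(0) = 0,
f₃(0) = −1. -/
theorem stmt_12 (κ : ℝ) (hκ : 0 ≤ κ) (hκ' : κ < 1) :
    ∃ f₁ f₂ f₃ : ℝ → ℝ,
      (∀ t : ℝ, HasDerivAt f₁ (-κ ^ 2 * f₂ t * f₃ t) t) ∧
      (∀ t : ℝ, HasDerivAt f₂ (f₁ t * f₃ t) t) ∧
      (∀ t : ℝ, HasDerivAt f₃ (-(f₁ t * f₂ t)) t) ∧
      f₁ 0 = -1 ∧ f₂ 0 = 0 ∧ f₃ 0 = -1 := by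

  -- c ψ = 1 - κ² sin² ψ > 0
  set c : ℝ → ℝ := fun ψ => 1 - κ ^ 2 * Real.sin ψ ^ 2 with hc
  have hκ2 : κ ^ 2 < 1 := by nlinarith
  have hcpos : ∀ ψ, 0 < c ψ := by
    intro ψ
    have h1 : Real.sin ψ ^ 2 ≤ 1 := sin_sq_le_one ψ
    have h2 : κ ^ 2 * Real.sin ψ ^ 2 ≤ κ ^ 2 * 1 := by
      apply mul_le_mul_of_nonneg_left h1 (sq_nonneg κ)
    simp only [hc]; nlinarith
  have hcle : ∀ ψ, c ψ ≤ 1 := by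
    intro ψ; simp only [hc]; nlinarith [sq_nonneg (κ * Real.sin ψ)]
  have hccont : Continuous c := by
    simp only [hc]; continuity
  have hsq : ∀ ψ, 0 < Real.sqrt (c ψ) := fun ψ => Real.sqrt_pos.mpr (hcpos ψ)
  have hsqle : ∀ ψ, Real.sqrt (c ψ) ≤ 1 := fun ψ => by
    rw [show (1:ℝ) = Real.sqrt 1 by simp]
    exact Real.sqrt_le_sqrt (hcle ψ)
  set h : ℝ → ℝ := fun ψ => (Real.sqrt (c ψ))⁻¹ with hh
  have hhcont : Continuous h := by
    apply Continuous.inv₀ (by exact hccont.sqrt) (fun ψ => (hsq ψ).ne')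
  have hhge : ∀ ψ, 1 ≤ h ψ := fun ψ => by
    rw [hh, le_inv_comm₀ one_pos (hsq ψ)]
    simpa using hsqle ψ
  set g : ℝ → ℝ := fun θ => ∫ ψ in (0:ℝ)..θ, h ψ with hg
  have hgderiv : ∀ θ, HasDerivAt g (h θ) θ := by
    intro θ
    exact intervalIntegral.integral_hasDerivAt_right
      (hhcont.intervalIntegrable _ _)
      (hhcont.stronglyMeasurableAtFilter _ _)
      hhcont.continuousAt
  have hgmono : StrictMono g := by
    apply strictMono_of_deriv_pos
    intro θ
    rw [(hgderiv θ).deriv]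
    exact lt_of_lt_of_le one_pos (hhge θ)
  have hgge : ∀ θ : ℝ, 0 ≤ θ → θ ≤ g θ := by
    intro θ hθ
    calc θ = ∫ ψ in (0:ℝ)..θ, (1:ℝ) := by simp
    _ ≤ g θ := intervalIntegral.integral_mono_on hθ
        (intervalIntegrable_const) (hhcont.intervalIntegrable _ _)
        (fun ψ _ => hhge ψ)
  have hgle : ∀ θ : ℝ, θ ≤ 0 → g θ ≤ θ := by
    intro θ hθ
    have key : (∫ ψ in θ..(0:ℝ), (1:ℝ)) ≤ ∫ ψ in θ..(0:ℝ), h ψ :=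
      intervalIntegral.integral_mono_on hθ
        (intervalIntegrable_const) (hhcont.intervalIntegrable _ _)
        (fun ψ _ => hhge ψ)
    have e1 : (∫ ψ in (0:ℝ)..θ, h ψ) = - ∫ ψ in θ..(0:ℝ), h ψ := by
      rw [intervalIntegral.integral_symm]
    have e2 : (∫ ψ in θ..(0:ℝ), (1:ℝ)) = -θ := by simp
    show (∫ ψ in (0:ℝ)..θ, h ψ) ≤ θ
    rw [e1]; linarith
  have hgcont : Continuous g := by
    apply continuous_iff_continuousAt.mpr (fun θ => (hgderiv θ).continuousAt)
  have hgsurj : Function.Surjective g := by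
    apply hgcont.surjective
    · exact Filter.tendsto_atTop_mono' _
        (Filter.eventually_atTop.mpr ⟨0, fun θ hθ => hgge θ hθ⟩) Filter.tendsto_id
    · exact Filter.tendsto_atBot_mono' _
        (Filter.eventually_atBot.mpr ⟨0, fun θ hθ => hgle θ hθ⟩) Filter.tendsto_id
  -- the inverse (Jacobi amplitude)
  set e := hgmono.orderIsoOfSurjective g hgsurj with he
  set θ : ℝ → ℝ := fun t => e.symm t with hθdef
  have hleft : ∀ t, g (θ t) = t := fun t => e.apply_symm_apply t
  have hθcont : Continuous θ := e.symm.continuous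
  have hθderiv : ∀ t, HasDerivAt θ (Real.sqrt (c (θ t))) t := by
    intro t
    have := HasDerivAt.of_local_left_inverse (hθcont.continuousAt)
      (hgderiv (θ t)) (by simp only [hh]; exact (inv_pos.mpr (hsq _)).ne') (Filter.Eventually.of_forall hleft)
    simpa [hh, inv_inv] using this
  have hθ0 : θ 0 = 0 := by
    have hg0 : g 0 = 0 := by simp [hg]
    exact hgmono.injective (by rw [hleft 0, hg0])
  refine ⟨fun t => -Real.sqrt (c (θ t)), fun t => Real.sin (θ t),
    fun t => -Real.cos (θ t), ?_, ?_, ?_, ?_, ?_, ?_⟩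
  · intro t
    have hsne : Real.sqrt (c (θ t)) ≠ 0 := (hsq _).ne'
    have h1 : HasDerivAt (fun t => Real.sin (θ t))
        (Real.cos (θ t) * Real.sqrt (c (θ t))) t :=
      (Real.hasDerivAt_sin (θ t)).comp t (hθderiv t)
    have h2 : HasDerivAt (fun t => c (θ t))
        (-(κ ^ 2 * (2 * Real.sin (θ t) * (Real.cos (θ t) * Real.sqrt (c (θ t)))))) t := by
      have h2a := ((h1.pow 2).const_mul (κ ^ 2)).const_sub 1
      have heq : (fun t => c (θ t)) = fun t => 1 - κ ^ 2 * Real.sin (θ t) ^ 2 := by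
        simp [hc]
      rw [heq]
      exact h2a.congr_deriv (by push_cast; ring)
    have h3 := (Real.hasDerivAt_sqrt (hcpos (θ t)).ne').comp t h2
    have h4 := h3.neg
    exact h4.congr_deriv (by field_simp)
  · intro t
    have h1 : HasDerivAt (fun t => Real.sin (θ t))
        (Real.cos (θ t) * Real.sqrt (c (θ t))) t :=
      (Real.hasDerivAt_sin (θ t)).comp t (hθderiv t)
    convert h1 using 1
    ring
  · intro t
    have h1 : HasDerivAt (fun t => -Real.cos (θ t))
        (-(-Real.sin (θ t) * Real.sqrt (c (θ t)))) t :=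
      ((Real.hasDerivAt_cos (θ t)).comp t (hθderiv t)).neg
    convert h1 using 1
    ring
  · simp [hθ0, hc]
  · simp [hθ0]
  · simp [hθ0]
end

section
/- Under the stated differential system with initial conditions, the Wronskian-type closure relations of the vector-field realization Vᵢ = fᵢ·d/du hold for all t ∈ ℝ: f₂(t)f₃'(t) − f₃(t)f₂'(t) = −f₁(t), f₃(t)f₁'(t) − f₁(t)f₃'(t) = (1 − κ²)·f₂(t), and f₁(t)f₂'(t) − f₂(t)f₁'(t) = f₃(t); i.e., the vector fields f₁ d/du, f₂ d/du, f₃ d/du close into a deformed so(2,1) Lie algebra. -/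
lemma const_of_hasDerivAt_zero {g : ℝ → ℝ} (hg : ∀ t, HasDerivAt g 0 t) (t : ℝ) :
    g t = g 0 :=
  is_const_of_deriv_eq_zero (fun s => (hg s).differentiableAt)
    (fun s => (hg s).deriv) t 0

/-- Under the Jacobi system f₁' = −κ²f₂f₃, f₂' = f₁f₃, f₃' = −f₁f₂ with
f₁(0) = −1, f₂(0) = 0, f₃(0) = −1, the vector fields Vᵢ = fᵢ·d/du close into a
deformed so(2,1) Lie algebra: f₂f₃' − f₃f₂' = −f₁, f₃f₁' − f₁f₃' = (1 − κ²)f₂,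
and f₁f₂' − f₂f₁' = f₃. -/
theorem stmt_14 (κ : ℝ) (f₁ f₂ f₃ : ℝ → ℝ)
    (h₁ : ∀ t, HasDerivAt f₁ (-κ ^ 2 * f₂ t * f₃ t) t)
    (h₂ : ∀ t, HasDerivAt f₂ (f₁ t * f₃ t) t)
    (h₃ : ∀ t, HasDerivAt f₃ (-(f₁ t * f₂ t)) t)
    (i₁ : f₁ 0 = -1) (i₂ : f₂ 0 = 0) (i₃ : f₃ 0 = -1) :
    ∀ t : ℝ,
      f₂ t * deriv f₃ t - f₃ t * deriv f₂ t = -f₁ t ∧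
      f₃ t * deriv f₁ t - f₁ t * deriv f₃ t = (1 - κ ^ 2) * f₂ t ∧
      f₁ t * deriv f₂ t - f₂ t * deriv f₁ t = f₃ t := by
  -- invariant 1 : f₂² + f₃² = 1
  have hA : ∀ t, f₂ t ^ 2 + f₃ t ^ 2 = 1 := by
    have h : ∀ t, HasDerivAt (fun s => f₂ s ^ 2 + f₃ s ^ 2) 0 t := by
      intro t
      have := (((h₂ t).fun_pow 2).fun_add ((h₃ t).fun_pow 2))
      exact this.congr_deriv (by ring)
    intro t
    have := const_of_hasDerivAt_zero h t
    simp only [i₂, i₃] at this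
    linarith [this]
  -- invariant 2 : f₁² − κ²f₃² = 1 − κ²
  have hB : ∀ t, f₁ t ^ 2 - κ ^ 2 * f₃ t ^ 2 = 1 - κ ^ 2 := by
    have h : ∀ t, HasDerivAt (fun s => f₁ s ^ 2 - κ ^ 2 * f₃ s ^ 2) 0 t := by
      intro t
      have := (((h₁ t).fun_pow 2).fun_sub (((h₃ t).fun_pow 2).const_mul (κ ^ 2)))
      exact this.congr_deriv (by ring)
    intro t
    have := const_of_hasDerivAt_zero h t
    simp only [i₁, i₃] at this
    linarith [this]
  -- invariant 3 : f₁² + κ²f₂² = 1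
  have hC : ∀ t, f₁ t ^ 2 + κ ^ 2 * f₂ t ^ 2 = 1 := by
    intro t
    have := hA t; have := hB t; nlinarith [hA t, hB t]
  intro t
  rw [(h₁ t).deriv, (h₂ t).deriv, (h₃ t).deriv]
  refine ⟨?_, ?_, ?_⟩
  · linear_combination (-f₁ t) * hA t
  · linear_combination (f₂ t) * hB t
  · linear_combination (f₃ t) * hC t
end

section
/- Under the stated differential system with initial conditions, the Casimir operator of the differential realization satisfies, for every twice differentiable g : ℝ → ℝ and all t ∈ ℝ: f₁(t)·(f₁·g')'(t) − f₂(t)·(f₂·g')'(t) − (1 − κ²)·f₃(t)·(f₃·g')'(t) = κ²·[(f₃(t)² − f₂(t)²)·g''(t) − 2·f₁(t)f₂(t)f₃(t)·g'(t)] (equivalently, with f₁ = −dn, f₂ = sn, f₃ = −cn, the Casimir equals κ²[(cn² − sn²)d²/du² − 2 sn·cn·dn·d/du]). -/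
/-- Under the Jacobi system f₁' = −κ²f₂f₃, f₂' = f₁f₃, f₃' = −f₁f₂ with
f₁(0) = −1, f₂(0) = 0, f₃(0) = −1, the Casimir operator
C = T₁² − T₂² − (1 − κ²)T₃² of the differential realization Tᵢ = fᵢ·d/du
satisfies, for every twice differentiable g (with first derivative g' and
second derivative g''):
f₁·(f₁g')' − f₂·(f₂g')' − (1 − κ²)f₃·(f₃g')'
  = κ²[(f₃² − f₂²)g'' − 2f₁f₂f₃g']. -/
theorem stmt_15 (κ : ℝ) (f₁ f₂ f₃ : ℝ → ℝ)
    (h₁ : ∀ t, HasDerivAt f₁ (-κ ^ 2 * f₂ t * f₃ t) t)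
    (h₂ : ∀ t, HasDerivAt f₂ (f₁ t * f₃ t) t)
    (h₃ : ∀ t, HasDerivAt f₃ (-(f₁ t * f₂ t)) t)
    (i₁ : f₁ 0 = -1) (i₂ : f₂ 0 = 0) (i₃ : f₃ 0 = -1)
    (g g' g'' : ℝ → ℝ)
    (hg : ∀ t, HasDerivAt g (g' t) t)
    (hg' : ∀ t, HasDerivAt g' (g'' t) t) :
    ∀ t : ℝ,
      f₁ t * deriv (fun s => f₁ s * g' s) t
        - f₂ t * deriv (fun s => f₂ s * g' s) t
        - (1 - κ ^ 2) * (f₃ t * deriv (fun s => f₃ s * g' s) t) =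
      κ ^ 2 * ((f₃ t ^ 2 - f₂ t ^ 2) * g'' t - 2 * (f₁ t * f₂ t * f₃ t) * g' t) := by
  -- conserved quantity 1 : f₁² + κ² f₂² = 1
  have inv1 : ∀ t, f₁ t ^ 2 + κ ^ 2 * f₂ t ^ 2 = 1 := by
    have hF : ∀ t, HasDerivAt (fun s => f₁ s ^ 2 + κ ^ 2 * f₂ s ^ 2) 0 t := by
      intro t
      have := (((h₁ t).fun_pow 2).fun_add (((h₂ t).fun_pow 2).const_mul (κ ^ 2)))
      refine this.congr_deriv ?_
      ring
    have hconst : ∀ t, f₁ t ^ 2 + κ ^ 2 * f₂ t ^ 2 = f₁ 0 ^ 2 + κ ^ 2 * f₂ 0 ^ 2 := by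
      intro t
      exact is_const_of_deriv_eq_zero (fun x => (hF x).differentiableAt)
        (fun x => (hF x).deriv) t 0
    intro t
    rw [hconst t, i₁, i₂]; ring
  -- conserved quantity 2 : f₂² + f₃² = 1
  have inv2 : ∀ t, f₂ t ^ 2 + f₃ t ^ 2 = 1 := by
    have hF : ∀ t, HasDerivAt (fun s => f₂ s ^ 2 + f₃ s ^ 2) 0 t := by
      intro t
      have := (((h₂ t).fun_pow 2).fun_add ((h₃ t).fun_pow 2))
      refine this.congr_deriv ?_
      ring
    have hconst : ∀ t, f₂ t ^ 2 + f₃ t ^ 2 = f₂ 0 ^ 2 + f₃ 0 ^ 2 := by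
      intro t
      exact is_const_of_deriv_eq_zero (fun x => (hF x).differentiableAt)
        (fun x => (hF x).deriv) t 0
    intro t
    rw [hconst t, i₂, i₃]; ring
  intro t
  have d1 : deriv (fun s => f₁ s * g' s) t
      = -κ ^ 2 * f₂ t * f₃ t * g' t + f₁ t * g'' t :=
    ((h₁ t).mul (hg' t)).deriv
  have d2 : deriv (fun s => f₂ s * g' s) t
      = f₁ t * f₃ t * g' t + f₂ t * g'' t :=
    ((h₂ t).mul (hg' t)).deriv
  have d3 : deriv (fun s => f₃ s * g' s) t
      = -(f₁ t * f₂ t) * g' t + f₃ t * g'' t :=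
    ((h₃ t).mul (hg' t)).deriv
  rw [d1, d2, d3]
  have e1 : f₁ t ^ 2 = 1 - κ ^ 2 * f₂ t ^ 2 := by linarith [inv1 t]
  have e3 : f₃ t ^ 2 = 1 - f₂ t ^ 2 := by linarith [inv2 t]
  linear_combination g'' t * e1 - g'' t * e3
end
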